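/- Let A ∈ ℤ^{m×d} with ker_ℤ(A) ∩ ℕ^d = {0}, and let (b_i) be a sequence in the affine semigroup ℕA generated by the columns of A such that ‖b_i‖_∞ ∈ O(i^r) for some r ∈ ℕ. Then there exists a polynomial q ∈ ℚ[t] with |{u ∈ ℕ^d : A u = b_i}| ≤ q(i) for all i ∈ ℕ. -/

import Mathlib

open Matrix

lemma mulVec_ratCast {k n : Type*} [Fintype n] (B : Matrix k n ℚ) (w : n → ℚ) :
    (B.map ((↑) : ℚ → ℝ)).mulVec (fun x => (w x : ℝ)) = fun i => ((B.mulVec w i : ℚ) : ℝ) := by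
  funext i
  simp [Matrix.mulVec, dotProduct, Matrix.map_apply]

lemma rat_solvable {k n : Type*} [Fintype k] [Fintype n]
    (B : Matrix k n ℚ) (c : k → ℚ)
    (h : ∃ x : n → ℝ, (B.map ((↑) : ℚ → ℝ)).mulVec x = fun i => (c i : ℝ)) :
    ∃ w : n → ℚ, B.mulVec w = c := by
  obtain ⟨x, hx⟩ := h
  have hrange : LinearMap.range (Bᵀ * B).mulVecLin = LinearMap.range Bᵀ.mulVecLin := by
    apply Submodule.eq_of_le_of_finrank_le
    · rw [Matrix.mulVecLin_mul]; exact LinearMap.range_comp_le_range _ _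
    · have h1 : (Bᵀ * B).rank = B.rank := Matrix.rank_transpose_mul_self B
      have h2 : Bᵀ.rank = B.rank := Matrix.rank_transpose B
      unfold Matrix.rank at h1 h2
      omega
  have hmem : Bᵀ.mulVec c ∈ LinearMap.range (Bᵀ * B).mulVecLin := by
    rw [hrange]; exact ⟨c, rfl⟩
  obtain ⟨w, hw⟩ := hmem
  refine ⟨w, ?_⟩
  -- pass to ℝ
  set B' := B.map ((↑) : ℚ → ℝ) with hB'
  have hwR : (B'ᵀ * B').mulVec (fun j => (w j : ℝ)) = B'ᵀ.mulVec (fun i => (c i : ℝ)) := by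
    have := congrArg (fun v => fun j => ((v j : ℚ) : ℝ)) hw
    simp only [Matrix.mulVecLin_apply] at this
    calc (B'ᵀ * B').mulVec (fun j => (w j : ℝ))
        = (fun j => (((Bᵀ * B).mulVec w j : ℚ) : ℝ)) := by
          rw [show B'ᵀ * B' = (Bᵀ * B).map ((↑) : ℚ → ℝ) from ?_]
          · exact mulVec_ratCast _ _
          · rw [hB', ← Matrix.transpose_map]
            exact (Matrix.map_mul (f := Rat.castHom ℝ)).symm
      _ = (fun j => ((Bᵀ.mulVec c j : ℚ) : ℝ)) := this
      _ = B'ᵀ.mulVec (fun i => (c i : ℝ)) := by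
          rw [hB', ← Matrix.transpose_map]; exact (mulVec_ratCast _ _).symm
  have hker : (fun j => (w j : ℝ)) - x ∈ LinearMap.ker B'.mulVecLin := by
    rw [← Matrix.ker_mulVecLin_transpose_mul_self]
    simp only [LinearMap.mem_ker, Matrix.mulVecLin_apply, Matrix.mulVec_sub]
    rw [hwR, ← Matrix.mulVec_mulVec, hx]
    simp
  simp only [LinearMap.mem_ker, Matrix.mulVecLin_apply, Matrix.mulVec_sub, sub_eq_zero] at hker
  rw [hx] at hker
  have : (fun i => ((B.mulVec w i : ℚ) : ℝ)) = fun i => ((c i : ℚ) : ℝ) := by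
    rw [← mulVec_ratCast]; exact hker
  funext i
  exact_mod_cast congrFun this i

lemma zero_not_mem_hull (m d : ℕ) (A : Matrix (Fin m) (Fin d) ℤ)
    (hker : ∀ u : Fin d → ℤ, A.mulVec u = 0 → (∀ j, 0 ≤ u j) → u = 0) :
    (0 : Fin m → ℝ) ∉ convexHull ℝ (Set.range fun j (i : Fin m) => (A i j : ℝ)) := by
  set cols : Fin d → (Fin m → ℝ) := fun j i => (A i j : ℝ) with hcols
  intro h0
  rw [convexHull_eq_union] at h0
  simp only [Set.mem_iUnion] at h0
  obtain ⟨T, hTs, hai, hT⟩ := h0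
  rw [Finset.convexHull_eq] at hT
  obtain ⟨t, ht0, ht1, htc⟩ := hT
  -- choose column indices
  have hgex : ∀ x : ↥T, ∃ j : Fin d, cols j = ↑x := fun x => hTs x.2
  choose g hg using hgex
  classical
  -- rational system over index ↥T
  set B : Matrix (Fin m ⊕ Unit) ↥T ℚ := fun i x =>
    Sum.elim (fun i' : Fin m => (A i' (g x) : ℚ)) (fun _ => 1) i with hB
  set c : (Fin m ⊕ Unit) → ℚ := Sum.elim (fun _ => 0) (fun _ => 1) with hc
  -- the real solution
  have hreal : ∃ x : ↥T → ℝ, (B.map ((↑) : ℚ → ℝ)).mulVec x = fun i => (c i : ℝ) := by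
    refine ⟨fun x => t ↑x, ?_⟩
    have hcm : ∑ x : ↥T, t ↑x • (↑x : Fin m → ℝ) = 0 := by
      rw [Finset.sum_coe_sort T (fun y => t y • (y : Fin m → ℝ))]
      rw [Finset.centerMass_eq_of_sum_1 _ _ ht1] at htc
      simpa using htc
    have hs1 : ∑ x : ↥T, t ↑x = 1 := by
      rw [Finset.sum_coe_sort T (fun y => t y)]; exact ht1
    funext i
    cases i with
    | inl i' =>
      have := congrFun hcm i'
      simp only [Finset.sum_apply, Pi.smul_apply, smul_eq_mul, Pi.zero_apply] at this
      simp only [Matrix.mulVec, dotProduct, Matrix.map_apply]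
      simp only [hB, hc]
      simp only [Sum.elim_inl, Rat.cast_intCast, Rat.cast_zero]
      rw [← this]
      refine Finset.sum_congr rfl fun x _ => ?_
      have := congrFun (hg x) i'
      simp only [hcols] at this
      rw [this]; ring
    | inr _ =>
      simp only [Matrix.mulVec, dotProduct, Matrix.map_apply]
      simp only [hB, hc]
      simp only [Sum.elim_inr, Rat.cast_one]
      simpa using hs1
  obtain ⟨w, hw⟩ := rat_solvable B c hreal
  -- uniqueness via affine independence ⇒ w = t on T, so w ≥ 0
  have hw1 : ∑ x : ↥T, w x = 1 := by
    have := congrFun hw (Sum.inr ())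
    simpa [hB, hc, Matrix.mulVec, dotProduct] using this
  have hwA : ∀ i' : Fin m, ∑ x : ↥T, (A i' (g x) : ℚ) * w x = 0 := by
    intro i'
    have := congrFun hw (Sum.inl i')
    simpa [hB, hc, Matrix.mulVec, dotProduct] using this
  have hwnn : ∀ x : ↥T, 0 ≤ w x := by
    have huniq := (affineIndependent_iff_eq_of_fintype_affineCombination_eq ℝ
      ((↑) : ↥T → (Fin m → ℝ))).mp hai
    have hs1 : ∑ x : ↥T, t ↑x = 1 := by
      rw [Finset.sum_coe_sort T (fun y => t y)]; exact ht1
    have hcast1 : ∑ x : ↥T, ((w x : ℝ)) = 1 := by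
      rw [← Rat.cast_sum]; rw [hw1]; norm_num
    have heq : (fun x : ↥T => (w x : ℝ)) = fun x : ↥T => t ↑x := by
      refine huniq (fun x : ↥T => (w x : ℝ)) (fun x : ↥T => t ↑x) hcast1 hs1 ?_
      rw [Finset.affineCombination_eq_linear_combination _ _ _ hcast1,
          Finset.affineCombination_eq_linear_combination _ _ _ hs1]
      have hcm : ∑ x : ↥T, t ↑x • (↑x : Fin m → ℝ) = 0 := by
        rw [Finset.sum_coe_sort T (fun y => t y • (y : Fin m → ℝ))]
        rw [Finset.centerMass_eq_of_sum_1 _ _ ht1] at htc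
        simpa using htc
      rw [hcm]
      funext i'
      simp only [Finset.sum_apply, Pi.smul_apply, smul_eq_mul, Pi.zero_apply]
      have := hwA i'
      have hcast := congrArg (fun q : ℚ => (q : ℝ)) this
      push_cast at hcast
      rw [← hcast]
      refine Finset.sum_congr rfl fun x _ => ?_
      have := congrFun (hg x) i'
      simp only [hcols] at this
      rw [this]; ring
    intro x
    have hx2 := ht0 ↑x x.2
    have hx3 : (w x : ℝ) = t ↑x := congrFun heq x
    rw [← hx3] at hx2
    exact_mod_cast hx2
  -- build rational solution on Fin d
  set w' : Fin d → ℚ := fun j => ∑ x : ↥T, if g x = j then w x else 0 with hw'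
  have hw'nn : ∀ j, 0 ≤ w' j := fun j =>
    Finset.sum_nonneg fun x _ => by by_cases h : g x = j <;> simp [h, hwnn x]
  have hw'sum : ∑ j, w' j = 1 := by
    rw [hw']
    rw [Finset.sum_comm]
    simp only [Finset.sum_ite_eq, Finset.mem_univ, if_true]
    exact hw1
  have hw'A : ∀ i' : Fin m, ∑ j, (A i' j : ℚ) * w' j = 0 := by
    intro i'
    simp only [hw', Finset.mul_sum]
    rw [Finset.sum_comm]
    have : ∀ x : ↥T, (∑ j, (A i' j : ℚ) * if g x = j then w x else 0)
        = (A i' (g x) : ℚ) * w x := by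
      intro x
      rw [Finset.sum_eq_single (g x)]
      · simp
      · intro j _ hj; simp [Ne.symm hj]
      · simp
    rw [Finset.sum_congr rfl fun x _ => this x]
    exact hwA i'
  -- clear denominators
  set N : ℕ := ∏ j, (w' j).den with hN
  have hNpos : 0 < N := Finset.prod_pos fun j _ => (w' j).pos
  have hdvd : ∀ j, ((w' j).den : ℤ) ∣ (N : ℤ) := fun j =>
    Int.natCast_dvd_natCast.mpr (Finset.dvd_prod_of_mem _ (Finset.mem_univ j))
  set u : Fin d → ℤ := fun j => (w' j).num * ((N : ℤ) / ((w' j).den : ℤ)) with hu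
  have hucast : ∀ j, (u j : ℚ) = w' j * N := by
    intro j
    have hk := hdvd j
    have hden : ((w' j).den : ℤ) ≠ 0 := Int.natCast_ne_zero.mpr (w' j).den_nz
    obtain ⟨k2, hk2⟩ := hk
    rw [hu]
    simp only [hk2]
    rw [Int.mul_ediv_cancel_left _ hden]
    push_cast
    have hc2 : (N:ℚ) = ((w' j).den : ℚ) * (k2:ℚ) := by exact_mod_cast hk2
    rw [hc2, ← mul_assoc, Rat.mul_den_eq_num]
  have hunn : ∀ j, 0 ≤ u j := by
    intro j
    have : (0:ℚ) ≤ (u j : ℚ) := by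
      rw [hucast j]
      exact mul_nonneg (hw'nn j) (by positivity)
    exact_mod_cast this
  have huA : A.mulVec u = 0 := by
    funext i'
    have : ((A.mulVec u i' : ℤ) : ℚ) = 0 := by
      simp only [Matrix.mulVec, dotProduct]
      push_cast
      rw [Finset.sum_congr rfl fun j _ => by rw [hucast j]]
      have : ∑ j, (A i' j : ℚ) * (w' j * N) = (∑ j, (A i' j : ℚ) * w' j) * N := by
        rw [Finset.sum_mul]; exact Finset.sum_congr rfl fun j _ => by ring
      rw [this, hw'A i', zero_mul]
    exact_mod_cast this
  have hune : u ≠ 0 := by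
    intro h
    have h0 : ∑ j, (u j : ℚ) = 0 := by simp [h]
    have h1 : ∑ j, (u j : ℚ) = (N : ℚ) := by
      rw [Finset.sum_congr rfl fun j _ => hucast j, ← Finset.sum_mul, hw'sum, one_mul]
    rw [h1] at h0
    have : (N:ℚ) ≠ 0 := by exact_mod_cast hNpos.ne'
    exact this h0
  exact hune (hker u huA hunn)

lemma exists_pos_functional (m d : ℕ) (A : Matrix (Fin m) (Fin d) ℤ)
    (hker : ∀ u : Fin d → ℤ, A.mulVec u = 0 → (∀ j, 0 ≤ u j) → u = 0) :
    ∃ (f : (Fin m → ℝ) →L[ℝ] ℝ) (δ : ℝ), 0 < δ ∧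
      ∀ j, δ ≤ f (fun i => (A i j : ℝ)) := by
  have h0 := zero_not_mem_hull m d A hker
  have hfin : (Set.range fun j (i : Fin m) => (A i j : ℝ)).Finite := Set.finite_range _
  obtain ⟨f, u, hu0, hub⟩ := geometric_hahn_banach_point_closed (E := Fin m → ℝ)
    (convex_convexHull ℝ _) (hfin.isCompact_convexHull ℝ).isClosed h0
  refine ⟨f, u, by simpa using hu0, fun j =>
    (hub _ (subset_convexHull ℝ _ ⟨j, rfl⟩)).le⟩

lemma box_card (d : ℕ) (S : Set (Fin d → ℤ)) (N : ℕ)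
    (hS : ∀ u ∈ S, ∀ j, 0 ≤ u j ∧ u j ≤ (N : ℤ)) :
    S.ncard ≤ (N + 1) ^ d := by
  classical
  have hsub : S ⊆ ↑(Fintype.piFinset fun _ : Fin d => Finset.Icc (0:ℤ) (N:ℤ)) := by
    intro u hu
    simp only [Finset.coe_sort_coe, Finset.mem_coe, Fintype.mem_piFinset, Finset.mem_Icc]
    exact hS u hu
  have h1 := Set.ncard_le_ncard hsub (Finset.finite_toSet _)
  rw [Set.ncard_coe_finset] at h1
  refine h1.trans ?_
  rw [Fintype.card_piFinset]
  simp [Int.card_Icc]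

/-- If `ker_ℤ(A) ∩ ℕ^d = {0}` and `(b_i)` is a sequence in `ℕA` with `‖b_i‖_∞ ∈ O(i^r)`,
then the fiber sizes `|𝓕_{A,b_i}|` are bounded by a polynomial in `i`
(a meaningful parametrization). -/
theorem stmt2 (m d : ℕ) (A : Matrix (Fin m) (Fin d) ℤ)
    (hker : ∀ u : Fin d → ℤ, A.mulVec u = 0 → (∀ j, 0 ≤ u j) → u = 0)
    (b : ℕ → Fin m → ℤ)
    (hb : ∀ i, ∃ u : Fin d → ℤ, (∀ j, 0 ≤ u j) ∧ A.mulVec u = b i)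
    (r : ℕ) (C : ℚ) (i0 : ℕ)
    (hO : ∀ i : ℕ, i0 ≤ i → ∀ j, (|b i j| : ℚ) ≤ C * (i : ℚ) ^ r) :
    ∃ q : Polynomial ℚ, ∀ i : ℕ,
      ((Set.ncard {u : Fin d → ℤ | (∀ j, 0 ≤ u j) ∧ A.mulVec u = b i} : ℚ))
        ≤ q.eval (i : ℚ) := by
  classical
  obtain ⟨f, δ, hδ, hf⟩ := exists_pos_functional m d A hker
  set cols : Fin d → Fin m → ℝ := fun j i => (A i j : ℝ) with hcols
  set e : Fin m → Fin m → ℝ := fun k i => if k = i then 1 else 0 with he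
  set F : ℝ := ∑ k : Fin m, |f (e k)| with hF
  have hF0 : 0 ≤ F := Finset.sum_nonneg fun k _ => abs_nonneg _
  set bR : ℕ → Fin m → ℝ := fun i k => (b i k : ℝ) with hbR
  set fiber : ℕ → Set (Fin d → ℤ) :=
    fun i => {u : Fin d → ℤ | (∀ j, 0 ≤ u j) ∧ A.mulVec u = b i} with hfiber
  -- expansion of f
  have hfv : ∀ v : Fin m → ℝ, f v = ∑ k, v k * f (e k) := by
    intro v
    conv_lhs => rw [pi_eq_sum_univ v]
    rw [map_sum]
    refine Finset.sum_congr rfl fun k _ => ?_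
    rw [_root_.map_smul]
    simp [he, smul_eq_mul]
  -- key coordinate bound
  have key : ∀ i, ∀ u ∈ fiber i, ∀ j0, (u j0 : ℝ) * δ ≤ f (bR i) := by
    rintro i u ⟨hunn, huA⟩ j0
    have hAu : ∑ j, (u j : ℝ) • cols j = bR i := by
      funext k
      have := congrFun huA k
      simp only [Matrix.mulVec, dotProduct] at this
      simp only [Finset.sum_apply, Pi.smul_apply, smul_eq_mul, hcols, hbR]
      exact_mod_cast (by push_cast [← this]; exact Finset.sum_congr rfl fun j _ => by ring :
        ((∑ j, (u j : ℝ) * (A k j : ℝ)) = ((b i k : ℤ) : ℝ)))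
    have h1 : f (bR i) = ∑ j, (u j : ℝ) * f (cols j) := by
      rw [← hAu, map_sum]
      exact Finset.sum_congr rfl fun j _ => by rw [_root_.map_smul]; simp [smul_eq_mul]
    have hterm : ∀ j, (0:ℝ) ≤ (u j : ℝ) * f (cols j) := fun j =>
      mul_nonneg (by exact_mod_cast hunn j) ((hδ.trans_le (hf j)).le)
    have h2 : (u j0 : ℝ) * f (cols j0) ≤ ∑ j, (u j : ℝ) * f (cols j) :=
      Finset.single_le_sum (fun j _ => hterm j) (Finset.mem_univ j0)
    have h3 : (u j0 : ℝ) * δ ≤ (u j0 : ℝ) * f (cols j0) :=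
      mul_le_mul_of_nonneg_left (hf j0) (by exact_mod_cast hunn j0)
    rw [h1]
    exact h3.trans h2
  -- natural box size
  set Nn : ℕ → ℕ := fun i => (⌊f (bR i) / δ⌋).toNat with hNn
  have hbox : ∀ i, (fiber i).ncard ≤ (Nn i + 1) ^ d := by
    intro i
    refine box_card d (fiber i) (Nn i) ?_
    rintro u hu j
    refine ⟨hu.1 j, ?_⟩
    have h1 : (u j : ℝ) ≤ f (bR i) / δ := by
      rw [le_div_iff₀ hδ]
      exact key i u hu j
    have h2 : u j ≤ ⌊f (bR i) / δ⌋ := Int.le_floor.mpr h1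
    exact h2.trans (Int.self_le_toNat _)
  -- choose rational G
  obtain ⟨G, hG⟩ := exists_rat_gt (max (F / δ) 0)
  have hG0 : (0:ℝ) < G := lt_of_le_of_lt (le_max_right _ _) hG
  have hGF : F / δ ≤ (G:ℝ) := (le_max_left _ _).trans hG.le
  have hGQ0 : (0:ℚ) < G := by exact_mod_cast hG0
  -- bound for i ≥ i0
  have hNbound : ∀ i : ℕ, i0 ≤ i → ((Nn i : ℚ)) ≤ |C| * G * (i:ℚ)^r := by
    intro i hi
    have hfb : f (bR i) ≤ (C:ℝ) * (i:ℝ)^r * F := by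
      rw [hfv (bR i), hF, Finset.mul_sum]
      refine Finset.sum_le_sum fun k _ => ?_
      have h1 : bR i k * f (e k) ≤ |bR i k| * |f (e k)| := by
        calc bR i k * f (e k) ≤ |bR i k * f (e k)| := le_abs_self _
        _ = |bR i k| * |f (e k)| := abs_mul _ _
      refine h1.trans ?_
      refine mul_le_mul_of_nonneg_right ?_ (abs_nonneg _)
      have h2 := hO i hi k
      have : (|b i k| : ℝ) ≤ ((C * (i:ℚ)^r : ℚ) : ℝ) := by exact_mod_cast h2
      push_cast at this
      simpa [hbR] using this
    have hstep : f (bR i) / δ ≤ ((|C| * G * (i:ℚ)^r : ℚ) : ℝ) := by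
      push_cast
      have hir : (0:ℝ) ≤ (i:ℝ)^r := by positivity
      rcases le_or_gt C 0 with hC | hC
      · have h5 : f (bR i) / δ ≤ (C:ℝ) * (i:ℝ)^r * F / δ :=
          (div_le_div_iff_of_pos_right hδ).mpr hfb
        have h6 : (C:ℝ) * (i:ℝ)^r * F / δ ≤ 0 := by
          apply div_nonpos_of_nonpos_of_nonneg _ hδ.le
          have hC' : (C:ℝ) ≤ 0 := by exact_mod_cast hC
          calc (C:ℝ) * (i:ℝ)^r * F = (C:ℝ) * ((i:ℝ)^r * F) := by ring
            _ ≤ 0 := mul_nonpos_iff.mpr (Or.inr ⟨hC', mul_nonneg hir hF0⟩)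
        have h7 : (0:ℝ) ≤ |(C:ℚ)| * (G:ℝ) * (i:ℝ)^r := by positivity
        calc f (bR i) / δ ≤ 0 := h5.trans h6
          _ ≤ _ := by push_cast at h7 ⊢; nlinarith [h7]
      · have hCR : (0:ℝ) < (C:ℝ) := by exact_mod_cast hC
        have h5 : f (bR i) / δ ≤ (C:ℝ) * (i:ℝ)^r * (F / δ) := by
          rw [div_le_iff₀ hδ]
          calc f (bR i) ≤ (C:ℝ) * (i:ℝ)^r * F := hfb
            _ = (C:ℝ) * (i:ℝ)^r * (F/δ) * δ := by field_simp
        have h6 : (C:ℝ) * (i:ℝ)^r * (F / δ) ≤ |(C:ℝ)| * (G:ℝ) * (i:ℝ)^r := by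
          rw [abs_of_pos hCR]
          have hFδ : 0 ≤ F / δ := div_nonneg hF0 hδ.le
          nlinarith [mul_le_mul_of_nonneg_left hGF (mul_nonneg hCR.le hir)]
        have : |(C:ℝ)| = ((|C| : ℚ) : ℝ) := by push_cast; ring
        calc f (bR i) / δ ≤ |(C:ℝ)| * (G:ℝ) * (i:ℝ)^r := h5.trans h6
          _ = _ := by rw [this]; try norm_cast
    -- Nn i ≤ rational bound
    have h8 : ((Nn i : ℤ) : ℝ) ≤ ((|C| * G * (i:ℚ)^r : ℚ) : ℝ) := by
      rcases le_total (⌊f (bR i) / δ⌋) 0 with h | h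
      · have hN0 : (Nn i : ℤ) = 0 := by rw [hNn]; simp [Int.toNat_of_nonpos h]
        rw [hN0]
        have : (0:ℚ) ≤ |C| * G * (i:ℚ)^r := by positivity
        exact_mod_cast this
      · have hN0 : (Nn i : ℤ) = ⌊f (bR i) / δ⌋ := by rw [hNn]; simp [Int.toNat_of_nonneg h]
        rw [hN0]
        exact (Int.floor_le _).trans hstep
    exact_mod_cast h8
  -- the polynomial
  set q1 : Polynomial ℚ := (Polynomial.C (|C| * G) * Polynomial.X ^ r + 1) ^ d with hq1
  have hq1eval : ∀ x : ℚ, q1.eval x = (|C| * G * x ^ r + 1) ^ d := by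
    intro x; simp [hq1]
  set K : ℕ := (Finset.range i0).sup (fun i => (Nn i + 1) ^ d) with hK
  refine ⟨q1 + Polynomial.C (K : ℚ), fun i => ?_⟩
  rw [Polynomial.eval_add, Polynomial.eval_C, hq1eval]
  have hq1nn : (0:ℚ) ≤ (|C| * G * (i:ℚ) ^ r + 1) ^ d := by positivity
  rcases le_or_gt i0 i with hi | hi
  · -- main bound
    have h1 : ((fiber i).ncard : ℚ) ≤ ((Nn i + 1 : ℕ) : ℚ) ^ d := by
      have := hbox i
      exact_mod_cast Nat.cast_le.mpr (this.trans (le_of_eq rfl))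
    have h2 : ((Nn i + 1 : ℕ) : ℚ) ^ d ≤ (|C| * G * (i:ℚ) ^ r + 1) ^ d := by
      apply pow_le_pow_left₀ (by positivity)
      push_cast
      linarith [hNbound i hi]
    calc ((fiber i).ncard : ℚ) ≤ _ := h1.trans h2
      _ ≤ _ := le_add_of_nonneg_right (by positivity)
  · have h1 : (fiber i).ncard ≤ K := by
      refine (hbox i).trans ?_
      exact Finset.le_sup (f := fun i => (Nn i + 1) ^ d) (Finset.mem_range.mpr hi)
    have : ((fiber i).ncard : ℚ) ≤ (K : ℚ) := by exact_mod_cast h1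
    linarith
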